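/- The fundamental matrix Φ(t, T) of the linear time-varying system ẋ = −L(s)x, where L(s) is the Laplacian of a nonnegative locally integrable weight matrix A(s), is row-stochastic: all entries of Φ(t,T) are nonnegative and each row sums to 1. -/
import Mathlib


open intervalIntegral MeasureTheory Set

-- auxiliary lemmas
-- local invariance lemma
lemma local_inv (n : ℕ) (σ σ' : ℝ) (hσ : σ ≤ σ')
    (a : Fin n → Fin n → ℝ → ℝ) (ha : ∀ i j s, 0 ≤ a i j s)
    (x : Fin n → ℝ → ℝ) (hx : ∀ i, Continuous (x i))
    (hint : ∀ i, IntervalIntegrable (fun s => ∑ j, a i j s * (x j s - x i s)) volume σ σ')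
    (hrow_int : ∀ i, IntervalIntegrable (fun s => ∑ j, a i j s) volume σ σ')
    (hrow : ∀ i, (∫ s in σ..σ', ∑ j, a i j s) ≤ 1/2)
    (h0 : ∀ i, 0 ≤ x i σ)
    (heq : ∀ i τ, τ ∈ Set.Icc σ σ' → x i τ = x i σ + ∫ s in σ..τ, ∑ j, a i j s * (x j s - x i s)) :
    ∀ i τ, τ ∈ Set.Icc σ σ' → 0 ≤ x i τ := by
  intro i₀ τ₀ hτ₀
  by_contra hneg
  push_neg at hneg
  haveI : Nonempty (Fin n) := ⟨i₀⟩
  -- for each i pick a minimizer on [σ,σ']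
  have hcpt : IsCompact (Set.Icc σ σ') := isCompact_Icc
  have hmin : ∀ i : Fin n, ∃ τ ∈ Set.Icc σ σ', ∀ s ∈ Set.Icc σ σ', x i τ ≤ x i s := by
    intro i
    obtain ⟨τ, hτ, hm⟩ := hcpt.exists_isMinOn ⟨σ, left_mem_Icc.2 hσ⟩ (hx i).continuousOn
    exact ⟨τ, hτ, fun s hs => hm hs⟩
  choose τm hτm hτmin using hmin
  -- pick the i with the smallest minimum
  obtain ⟨istar, -, himin⟩ := Finset.exists_min_image Finset.univ (fun i => x i (τm i)) ⟨i₀, Finset.mem_univ i₀⟩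
  set τs := τm istar with hτs
  set μ : ℝ := x istar τs with hμdef
  have hglobal : ∀ j s, s ∈ Set.Icc σ σ' → μ ≤ x j s := by
    intro j s hs
    exact le_trans (himin j (Finset.mem_univ j)) (hτmin j s hs)
  have hμneg : μ < 0 := lt_of_le_of_lt (hglobal i₀ τ₀ hτ₀) hneg
  set b : ℝ := μ / 2 with hbdef
  have hbneg : b < 0 := by simp [hbdef]; linarith
  have hμb : μ < b := by rw [hbdef]; linarith
  have hbσ : b < x istar σ := lt_of_lt_of_le hbneg (h0 istar)
  have hστs : σ ≤ τs := (hτm istar).1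
  -- b is attained on [σ, τs]
  have hK : ∃ s ∈ Set.Icc σ τs, x istar s = b := by
    have := intermediate_value_Icc' hστs (hx istar).continuousOn
    have hb : b ∈ Set.Icc (x istar τs) (x istar σ) := ⟨hμb.le, hbσ.le⟩
    obtain ⟨s, hs, hxs⟩ := this hb
    exact ⟨s, hs, hxs⟩
  set K := {s | s ∈ Set.Icc σ τs ∧ x istar s = b} with hKdef
  have hKne : K.Nonempty := hK
  have hKclosed : IsClosed K := (isClosed_Icc.inter (isClosed_eq (hx istar) continuous_const))
  have hKbdd : BddAbove K := ⟨τs, fun s hs => hs.1.2⟩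
  set σ₁ := sSup K with hσ₁def
  have hσ₁K : σ₁ ∈ K := hKclosed.csSup_mem hKne hKbdd
  have hσ₁b : x istar σ₁ = b := hσ₁K.2
  have hσ₁τs : σ₁ ≤ τs := hσ₁K.1.2
  have hσ₁lt : σ₁ < τs := lt_of_le_of_ne hσ₁τs (by
    intro h; rw [h] at hσ₁b; rw [← hμdef] at hσ₁b; exact absurd hσ₁b hμb.ne)
  -- on [σ₁, τs], x istar ≤ b
  have hub : ∀ s ∈ Set.Icc σ₁ τs, x istar s ≤ b := by
    intro s hs
    by_contra hgt
    push_neg at hgt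
    have hsne : s ≠ τs := by
      intro h; rw [h, ← hμdef] at hgt; exact absurd hgt (not_lt.2 hμb.le)
    have hslt : s < τs := lt_of_le_of_ne hs.2 hsne
    have : ∃ s' ∈ Set.Icc s τs, x istar s' = b := by
      have := intermediate_value_Icc' hslt.le (hx istar).continuousOn
      exact this ⟨hμb.le, hgt.le⟩
    obtain ⟨s', hs', hxs'⟩ := this
    have hs'K : s' ∈ K := ⟨⟨le_trans (le_trans hσ₁K.1.1 hs.1) hs'.1, hs'.2⟩, hxs'⟩
    have : s' ≤ σ₁ := le_csSup hKbdd hs'K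
    have hsσ₁ : σ₁ < s := lt_of_le_of_ne hs.1 (by
      intro h; rw [← h] at hgt; exact absurd hσ₁b hgt.ne')
    linarith [hs'.1]
  -- integral estimate
  have hfull : ∀ c d, σ ≤ c → c ≤ d → d ≤ σ' → IntervalIntegrable (fun s => ∑ j, a istar j s * (x j s - x istar s)) volume c d := by
    intro c d h1 h2 h3
    exact (hint istar).mono_set (by
      rw [Set.uIcc_of_le h2, Set.uIcc_of_le hσ]
      exact Set.Icc_subset_Icc h1 h3)
  have hrfull : ∀ c d, σ ≤ c → c ≤ d → d ≤ σ' → IntervalIntegrable (fun s => ∑ j, a istar j s) volume c d := by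
    intro c d h1 h2 h3
    exact (hrow_int istar).mono_set (by
      rw [Set.uIcc_of_le h2, Set.uIcc_of_le hσ]
      exact Set.Icc_subset_Icc h1 h3)
  have hσ₁σ : σ ≤ σ₁ := hσ₁K.1.1
  have hτsσ' : τs ≤ σ' := (hτm istar).2
  have hσ₁Icc : σ₁ ∈ Set.Icc σ σ' := ⟨hσ₁σ, le_trans hσ₁τs hτsσ'⟩
  have hτsIcc : τs ∈ Set.Icc σ σ' := hτm istar
  have hdiff : x istar τs - x istar σ₁ = ∫ s in σ₁..τs, ∑ j, a istar j s * (x j s - x istar s) := by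
    rw [heq istar τs hτsIcc, heq istar σ₁ hσ₁Icc]
    have := integral_interval_sub_left (hfull σ τs le_rfl hστs hτsσ') (hfull σ σ₁ le_rfl hσ₁σ hσ₁Icc.2)
    linarith [this]
  set R : ℝ := ∫ s in σ₁..τs, ∑ j, a istar j s with hRdef
  have hRnonneg : 0 ≤ R := by
    apply intervalIntegral.integral_nonneg hσ₁lt.le
    intro u hu
    exact Finset.sum_nonneg fun j _ => ha istar j u
  have hR12 : R ≤ 1/2 := by
    have hsplit1 : (∫ s in σ..σ₁, ∑ j, a istar j s) + (∫ s in σ₁..τs, ∑ j, a istar j s) = ∫ s in σ..τs, ∑ j, a istar j s :=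
      integral_add_adjacent_intervals (hrfull σ σ₁ le_rfl hσ₁σ hσ₁Icc.2) (hrfull σ₁ τs hσ₁σ hσ₁τs hτsσ')
    have hsplit2 : (∫ s in σ..τs, ∑ j, a istar j s) + (∫ s in τs..σ', ∑ j, a istar j s) = ∫ s in σ..σ', ∑ j, a istar j s :=
      integral_add_adjacent_intervals (hrfull σ τs le_rfl hστs hτsσ') (hrfull τs σ' hστs hτsσ' le_rfl)
    have h1 : 0 ≤ ∫ s in σ..σ₁, ∑ j, a istar j s :=
      intervalIntegral.integral_nonneg hσ₁σ (fun u _ => Finset.sum_nonneg fun j _ => ha istar j u)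
    have h2 : 0 ≤ ∫ s in τs..σ', ∑ j, a istar j s :=
      intervalIntegral.integral_nonneg hτsσ' (fun u _ => Finset.sum_nonneg fun j _ => ha istar j u)
    have := hrow istar
    linarith
  have hlb : b * R ≤ x istar τs - x istar σ₁ := by
    rw [hdiff, hRdef, ← intervalIntegral.integral_const_mul]
    apply intervalIntegral.integral_mono_on hσ₁lt.le
      ((hrfull σ₁ τs hσ₁σ hσ₁τs hτsσ').const_mul b)
      (hfull σ₁ τs hσ₁σ hσ₁τs hτsσ')
    intro u hu
    rw [Finset.mul_sum]
    apply Finset.sum_le_sum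
    intro j _
    rw [mul_comm b (a istar j u)]
    apply mul_le_mul_of_nonneg_left _ (ha istar j u)
    have h1 : μ ≤ x j u := hglobal j u ⟨le_trans hσ₁σ hu.1, le_trans hu.2 hτsσ'⟩
    have h2 : x istar u ≤ b := hub u hu
    linarith [hbdef]
  have hfin : x istar τs - x istar σ₁ = b := by
    linarith [hbdef, hσ₁b, hμdef]
  rw [hfin] at hlb
  nlinarith

lemma global_inv (n : ℕ) (t T : ℝ) (htT : t ≤ T)
    (a : Fin n → Fin n → ℝ → ℝ) (ha : ∀ i j s, 0 ≤ a i j s)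
    (ha_int : ∀ i j, IntervalIntegrable (a i j) volume t T)
    (x : Fin n → ℝ → ℝ) (hx : ∀ i, Continuous (x i))
    (h0 : ∀ i, 0 ≤ x i t)
    (heq : ∀ i τ, τ ∈ Set.Icc t T →
      x i τ = x i t + ∫ s in t..τ, ∑ j, a i j s * (x j s - x i s)) :
    ∀ i τ, τ ∈ Set.Icc t T → 0 ≤ x i τ := by
  -- integrability of the vector fields and row sums
  have hfTT : ∀ i, IntervalIntegrable (fun s => ∑ j, a i j s * (x j s - x i s)) volume t T := by
    intro i
    have h1 : (fun s => ∑ j, a i j s * (x j s - x i s))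
        = ∑ j : Fin n, (fun s => a i j s * (x j s - x i s)) := by
      funext s; rw [Finset.sum_apply]
    rw [h1]
    exact IntervalIntegrable.sum Finset.univ fun j _ =>
      (ha_int i j).mul_continuousOn ((hx j).sub (hx i)).continuousOn
  have hrTT : ∀ i, IntervalIntegrable (fun s => ∑ j, a i j s) volume t T := by
    intro i
    have h1 : (fun s => ∑ j, a i j s) = ∑ j : Fin n, (fun s => a i j s) := by
      funext s; rw [Finset.sum_apply]
    rw [h1]
    exact IntervalIntegrable.sum Finset.univ fun j _ => ha_int i j
  have hmono : ∀ (F : ℝ → ℝ), IntervalIntegrable F volume t T →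
      ∀ c d, t ≤ c → c ≤ d → d ≤ T → IntervalIntegrable F volume c d := by
    intro F hF c d h1 h2 h3
    exact hF.mono_set (by rw [Set.uIcc_of_le h2, Set.uIcc_of_le htT]; exact Set.Icc_subset_Icc h1 h3)
  set G : Set ℝ := {τ | τ ∈ Set.Icc t T ∧ ∀ i s, s ∈ Set.Icc t τ → 0 ≤ x i s} with hGdef
  have htG : t ∈ G := ⟨left_mem_Icc.2 htT, fun i s hs => by
    have : s = t := le_antisymm hs.2 hs.1
    rw [this]; exact h0 i⟩
  have hGne : G.Nonempty := ⟨t, htG⟩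
  have hGbdd : BddAbove G := ⟨T, fun g hg => hg.1.2⟩
  set τ₀ := sSup G with hτ₀def
  have htτ₀ : t ≤ τ₀ := le_csSup hGbdd htG
  have hτ₀T : τ₀ ≤ T := csSup_le hGne fun g hg => hg.1.2
  have hlt : ∀ i s, t ≤ s → s < τ₀ → 0 ≤ x i s := by
    intro i s hts hsτ₀
    obtain ⟨g, hgG, hg⟩ := exists_lt_of_lt_csSup hGne hsτ₀
    exact hgG.2 i s ⟨hts, hg.le⟩
  have hG : ∀ i s, s ∈ Set.Icc t τ₀ → 0 ≤ x i s := by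
    intro i s hs
    rcases lt_or_eq_of_le hs.2 with h | h
    · exact hlt i s hs.1 h
    · subst h
      rcases eq_or_lt_of_le hs.1 with h' | h'
      · rw [← h']; exact h0 i
      · have htd : Filter.Tendsto (x i) (nhdsWithin τ₀ (Set.Iio τ₀)) (nhds (x i τ₀)) :=
          ((hx i).tendsto τ₀).mono_left nhdsWithin_le_nhds
        refine ge_of_tendsto htd ?_
        filter_upwards [Ioo_mem_nhdsLT_of_mem (Set.mem_Ioc.2 ⟨h', le_rfl⟩)] with u hu
        exact hlt i u hu.1.le hu.2
  have hτ₀G : τ₀ ∈ G := ⟨⟨htτ₀, hτ₀T⟩, hG⟩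
  -- show τ₀ = T
  rcases eq_or_lt_of_le hτ₀T with hfin | hlt'
  · intro i τ hτ
    exact hG i τ ⟨hτ.1, by rw [hfin]; exact hτ.2⟩
  · exfalso
    -- find σ' ∈ (τ₀, T] with all row-sum integrals ≤ 1/2
    have hev : ∀ i : Fin n, ∀ᶠ σ in nhdsWithin τ₀ (Set.Icc τ₀ T),
        (∫ s in τ₀..σ, ∑ j, a i j s) < 1/2 := by
      intro i
      have hint' : IntervalIntegrable (fun s => ∑ j, a i j s) volume τ₀ T :=
        hmono _ (hrTT i) τ₀ T htτ₀ hτ₀T le_rfl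
      have hcont := intervalIntegral.continuousOn_primitive_interval' hint' Set.left_mem_uIcc
      have hwa : ContinuousWithinAt (fun σ => ∫ s in τ₀..σ, ∑ j, a i j s) (Set.Icc τ₀ T) τ₀ := by
        have := hcont τ₀ Set.left_mem_uIcc
        rwa [Set.uIcc_of_le hτ₀T] at this
      have h0' : (∫ s in τ₀..τ₀, ∑ j, a i j s) = 0 := intervalIntegral.integral_same
      have : Filter.Tendsto (fun σ => ∫ s in τ₀..σ, ∑ j, a i j s)
          (nhdsWithin τ₀ (Set.Icc τ₀ T)) (nhds 0) := by rw [← h0']; exact hwa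
      exact this.eventually_lt_const (by norm_num)
    have hevall : ∀ᶠ σ in nhdsWithin τ₀ (Set.Icc τ₀ T),
        ∀ i : Fin n, (∫ s in τ₀..σ, ∑ j, a i j s) < 1/2 :=
      Filter.eventually_all.2 hev
    have hle : nhdsWithin τ₀ (Set.Ioc τ₀ T) ≤ nhdsWithin τ₀ (Set.Icc τ₀ T) :=
      nhdsWithin_mono τ₀ Set.Ioc_subset_Icc_self
    haveI : (nhdsWithin τ₀ (Set.Ioc τ₀ T)).NeBot := left_nhdsWithin_Ioc_neBot hlt'
    obtain ⟨σ', hσ'row, hσ'mem⟩ :=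
      ((hevall.filter_mono hle).and (Filter.eventually_mem_set.2 self_mem_nhdsWithin)).exists
    have hτ₀σ' : τ₀ ≤ σ' := hσ'mem.1.le
    have hσ'T : σ' ≤ T := hσ'mem.2
    have htσ' : t ≤ σ' := le_trans htτ₀ hτ₀σ'
    have hloc : ∀ i τ, τ ∈ Set.Icc τ₀ σ' → 0 ≤ x i τ := by
      apply local_inv n τ₀ σ' hτ₀σ' a ha x hx
      · intro i
        exact hmono _ (hfTT i) τ₀ σ' htτ₀ hτ₀σ' hσ'T
      · intro i
        exact hmono _ (hrTT i) τ₀ σ' htτ₀ hτ₀σ' hσ'T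
      · intro i
        exact (hσ'row i).le
      · intro i
        exact hG i τ₀ ⟨htτ₀, le_rfl⟩
      · intro i τ hτ
        have hτIcc : τ ∈ Set.Icc t T := ⟨le_trans htτ₀ hτ.1, le_trans hτ.2 hσ'T⟩
        have e1 := heq i τ hτIcc
        have e2 := heq i τ₀ ⟨htτ₀, hτ₀T⟩
        have e3 := integral_interval_sub_left
          (hmono _ (hfTT i) t τ le_rfl hτIcc.1 hτIcc.2)
          (hmono _ (hfTT i) t τ₀ le_rfl htτ₀ hτ₀T)
        linarith
    have hσ'G : σ' ∈ G := by
      refine ⟨⟨htσ', hσ'T⟩, ?_⟩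
      intro i s hs
      rcases le_total s τ₀ with h | h
      · exact hG i s ⟨hs.1, h⟩
      · exact hloc i s ⟨h, hs.2⟩
    have : σ' ≤ τ₀ := le_csSup hGbdd hσ'G
    exact absurd (lt_of_lt_of_le hσ'mem.1 this) (lt_irrefl τ₀)


/-- The fundamental matrix `Φ(t,T)` of the consensus flow
`ẋ = -L(s)x` (i.e. the matrix satisfying `x(T) = Φ ⬝ x(t)` for every
Carathéodory solution of the integral consensus equation) is row-stochastic:
nonnegative entries with unit row sums. -/
theorem fundamental_matrix_row_stochastic
    (n : ℕ) (t T : ℝ) (htT : t ≤ T)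
    (a : Fin n → Fin n → ℝ → ℝ)
    (ha_nonneg : ∀ i j s, 0 ≤ a i j s)
    (ha_int : ∀ i j, IntervalIntegrable (a i j) MeasureTheory.volume t T)
    (Φ : Matrix (Fin n) (Fin n) ℝ)
    -- Φ maps the state at time t of any solution to its state at time T
    (hΦ : ∀ x : Fin n → ℝ → ℝ, (∀ i, Continuous (x i)) →
      (∀ i τ, τ ∈ Set.Icc t T →
        x i τ = x i t + ∫ s in t..τ, ∑ j, a i j s * (x j s - x i s)) →
      (fun i => x i T) = Φ.mulVec (fun i => x i t))
    -- solutions exist from every initial condition at time t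
    (hexists : ∀ v : Fin n → ℝ, ∃ x : Fin n → ℝ → ℝ,
      (∀ i, Continuous (x i)) ∧ (∀ i, x i t = v i) ∧
      (∀ i τ, τ ∈ Set.Icc t T →
        x i τ = x i t + ∫ s in t..τ, ∑ j, a i j s * (x j s - x i s))) :
    (∀ i j, 0 ≤ Φ i j) ∧ (∀ i, ∑ j, Φ i j = 1) := by
  constructor
  · intro i j
    obtain ⟨x, hxc, hx0, hxeq⟩ := hexists (Pi.single j 1)
    have hmap := hΦ x hxc hxeq
    have hTnn : 0 ≤ x i T := by
      refine global_inv n t T htT a ha_nonneg ha_int x hxc ?_ hxeq i T (Set.right_mem_Icc.2 htT)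
      intro k
      rw [hx0 k]
      by_cases h : k = j
      · subst h; simp
      · simp [Pi.single_apply, h]
    have hval : x i T = Φ i j := by
      have := congrFun hmap i
      rw [this]
      have hv : (fun k => x k t) = Pi.single j 1 := funext hx0
      rw [hv, Matrix.mulVec_single]
      simp
    rwa [hval] at hTnn
  · intro i
    have hmap := hΦ (fun _ _ => 1) (fun _ => continuous_const) (by
      intro k τ hτ
      simp)
    have := congrFun hmap i
    simp only [Matrix.mulVec, dotProduct, mul_one] at this
    exact this.symm
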